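/- Let 1 \le t \le k < n/2, let A be the set of permutations in S_n fixing no subset of size at most t, and let \Omega be the set of k-element subsets of \{1, \ldots, n\}, with S_n acting naturally. Let a_k(t) (resp. a_{n-k}(t)) be the proportion of elements of S_k (resp. S_{n-k}) fixing no set of size at most t. Then the expected number of fixed points on \Omega of a uniformly random element of A equals a_k(t) \cdot a_{n-k}(t) \cdot k! (n-k)! \binom{n}{k} / |A|, which equals a_k(t)\, a_{n-k}(t)\, n! / |A|. -/

import Mathlib

open scoped Classical

section Helpers

open Equiv Finset

/-- σ fixes setwise no nonempty subset of size at most t. -/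
abbrev NoSmall {α : Type*} [DecidableEq α] (t : ℕ) (σ : Equiv.Perm α) : Prop :=
  ∀ s : Finset α, 1 ≤ s.card → s.card ≤ t → s.image σ ≠ s

lemma perm_image_eq_iff {α : Type*} [DecidableEq α] (σ : Equiv.Perm α) (u : Finset α) :
    u.image σ = u ↔ ∀ a, σ a ∈ u ↔ a ∈ u := by
  constructor
  · intro h a
    constructor
    · intro ha
      rw [← h] at ha
      obtain ⟨b, hb, hba⟩ := Finset.mem_image.1 ha
      rwa [← σ.injective hba]
    · intro ha; rw [← h]; exact Finset.mem_image_of_mem _ ha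
  · intro h
    ext b
    simp only [Finset.mem_image]
    constructor
    · rintro ⟨a, ha, rfl⟩; exact (h a).2 ha
    · intro hb
      refine ⟨σ.symm b, ?_, σ.apply_symm_apply b⟩
      have := h (σ.symm b)
      rw [σ.apply_symm_apply] at this
      exact this.1 hb

lemma noSmall_iff {α : Type*} [DecidableEq α] (t : ℕ) (σ : Equiv.Perm α) :
    NoSmall t σ ↔ ∀ u : Finset α, 1 ≤ u.card → u.card ≤ t → ¬(∀ a, σ a ∈ u ↔ a ∈ u) := by
  unfold NoSmall
  simp_rw [Ne, perm_image_eq_iff]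

lemma noSmall_congr {α β : Type*} [DecidableEq α] [DecidableEq β] (e : α ≃ β) {t : ℕ}
    {σ : Equiv.Perm α} (h : NoSmall t σ) : NoSmall t (e.permCongr σ) := by
  rw [noSmall_iff] at h ⊢
  intro v h1 h2 hv
  have key : ∀ b, b ∈ v.image e.symm ↔ e b ∈ v := by
    intro b
    simp [Finset.mem_image, Equiv.symm_apply_eq]
  refine h (v.image e.symm) ?_ ?_ ?_
  · rwa [Finset.card_image_of_injective _ e.symm.injective]
  · rwa [Finset.card_image_of_injective _ e.symm.injective]
  · intro a
    rw [key, key]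
    have := hv (e a)
    simpa using this

lemma card_noSmall_congr {α β : Type*} [DecidableEq α] [DecidableEq β] (e : α ≃ β) (t : ℕ) :
    Nat.card {σ : Equiv.Perm α // NoSmall t σ} = Nat.card {σ : Equiv.Perm β // NoSmall t σ} := by
  apply Nat.card_congr
  refine Equiv.subtypeEquiv e.permCongr (fun σ => ⟨fun h => noSmall_congr e h, fun h => ?_⟩)
  have := noSmall_congr e.symm h
  have h2 : e.symm.permCongr (e.permCongr σ) = σ := by ext a; simp
  rwa [h2] at this

lemma noSmall_restrict {α : Type*} [DecidableEq α] {t : ℕ} {p : α → Prop} [DecidablePred p]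
    {σ : Equiv.Perm α} (h : ∀ a, p (σ a) ↔ p a) (hA : NoSmall t σ) :
    NoSmall t (σ.subtypePerm (fun a => h a)) := by
  rw [noSmall_iff] at hA ⊢
  intro u h1 h2 hu
  have mm : ∀ (b : α), b ∈ u.map (Function.Embedding.subtype p) ↔ ∃ hb : p b, ⟨b, hb⟩ ∈ u := by
    intro b
    simp only [Finset.mem_map, Function.Embedding.coe_subtype]
    constructor
    · rintro ⟨x, hx, rfl⟩; exact ⟨x.2, hx⟩
    · rintro ⟨hb, hx⟩; exact ⟨⟨b, hb⟩, hx, rfl⟩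
  refine hA (u.map (Function.Embedding.subtype p)) ?_ ?_ ?_
  · rwa [Finset.card_map]
  · rwa [Finset.card_map]
  · intro a
    by_cases ha : p a
    · have hσa : p (σ a) := (h a).2 ha
      rw [mm, mm]
      constructor
      · rintro ⟨hb, hx⟩
        refine ⟨ha, ?_⟩
        have := (hu ⟨a, ha⟩).1 (by convert hx using 2; rfl)
        exact this
      · rintro ⟨hb, hx⟩
        refine ⟨hσa, ?_⟩
        have := (hu ⟨a, ha⟩).2 hx
        convert this using 2; rfl
    · have hσa : ¬ p (σ a) := fun hh => ha ((h a).1 hh)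
      rw [mm, mm]
      constructor
      · rintro ⟨hb, _⟩; exact absurd hb hσa
      · rintro ⟨hb, _⟩; exact absurd hb ha

lemma noSmall_subtypeCongr {α : Type*} [DecidableEq α] {t : ℕ} {p : α → Prop} [DecidablePred p]
    {σ₁ : Equiv.Perm {a // p a}} {σ₂ : Equiv.Perm {a // ¬ p a}}
    (h1 : NoSmall t σ₁) (h2 : NoSmall t σ₂) : NoSmall t (σ₁.subtypeCongr σ₂) := by
  rw [noSmall_iff] at h1 h2 ⊢
  intro u hc1 hc2 hu
  obtain ⟨a, ha⟩ := Finset.card_pos.1 hc1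
  have cardsub : ∀ (q : α → Prop) [DecidablePred q], (u.subtype q).card ≤ u.card := by
    intro q _
    rw [← Finset.card_map (Function.Embedding.subtype q), Finset.subtype_map]
    exact Finset.card_filter_le _ _
  by_cases hpa : p a
  · refine h1 (u.subtype p) ?_ ?_ ?_
    · exact Finset.card_pos.2 ⟨⟨a, hpa⟩, Finset.mem_subtype.2 ha⟩
    · exact le_trans (cardsub p) hc2
    · intro x
      rw [Finset.mem_subtype, Finset.mem_subtype]
      have := hu ↑x
      rwa [Equiv.Perm.subtypeCongr.left_apply _ _ x.2] at this
  · refine h2 (u.subtype (fun a => ¬ p a)) ?_ ?_ ?_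
    · exact Finset.card_pos.2 ⟨⟨a, hpa⟩, Finset.mem_subtype.2 ha⟩
    · exact le_trans (cardsub _) hc2
    · intro x
      rw [Finset.mem_subtype, Finset.mem_subtype]
      have := hu ↑x
      rwa [Equiv.Perm.subtypeCongr.right_apply _ _ x.2] at this

/-- Decomposition of permutations preserving `p` that fix no small set, as pairs of
permutations of `p`-part and complement, each fixing no small set. -/
noncomputable def splitEquiv {α : Type*} [DecidableEq α] (t : ℕ) (p : α → Prop)
    [DecidablePred p] :
    {σ : Equiv.Perm α // NoSmall t σ ∧ (∀ a, p (σ a) ↔ p a)} ≃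
      {σ : Equiv.Perm {a // p a} // NoSmall t σ} ×
        {σ : Equiv.Perm {a // ¬ p a} // NoSmall t σ} where
  toFun σ :=
    (⟨σ.1.subtypePerm (fun a => σ.2.2 a), noSmall_restrict σ.2.2 σ.2.1⟩,
     ⟨σ.1.subtypePerm (fun a => (not_congr (σ.2.2 a))),
       noSmall_restrict (p := fun a => ¬ p a) (fun a => not_congr (σ.2.2 a)) σ.2.1⟩)
  invFun x :=
    ⟨x.1.1.subtypeCongr x.2.1, noSmall_subtypeCongr x.1.2 x.2.2, by
      intro a
      by_cases h : p a
      · rw [Equiv.Perm.subtypeCongr.left_apply _ _ h]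
        exact iff_of_true (x.1.1 ⟨a, h⟩).2 h
      · rw [Equiv.Perm.subtypeCongr.right_apply _ _ h]
        exact iff_of_false (x.2.1 ⟨a, h⟩).2 h⟩
  left_inv σ := by
    ext a
    simp only [Equiv.Perm.subtypeCongr.apply]
    split_ifs <;> rfl
  right_inv x := by
    refine Prod.ext (Subtype.ext ?_) (Subtype.ext ?_)
    · ext y
      simp [Equiv.Perm.subtypeCongr.left_apply _ _ y.2]
    · ext y
      simp [Equiv.Perm.subtypeCongr.right_apply _ _ y.2]

lemma card_fix {n k t : ℕ} (s : Finset (Fin n)) (hs : s.card = k) :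
    Nat.card {σ : Equiv.Perm (Fin n) // NoSmall t σ ∧ s.image σ = s} =
      Nat.card {σ : Equiv.Perm (Fin k) // NoSmall t σ} *
        Nat.card {σ : Equiv.Perm (Fin (n - k)) // NoSmall t σ} := by
  have h1 : {σ : Equiv.Perm (Fin n) // NoSmall t σ ∧ s.image σ = s} ≃
      {σ : Equiv.Perm (Fin n) // NoSmall t σ ∧ (∀ a, (σ a) ∈ s ↔ a ∈ s)} :=
    Equiv.subtypeEquivRight (fun σ => by rw [perm_image_eq_iff])
  rw [Nat.card_congr (h1.trans (splitEquiv t (· ∈ s))), Nat.card_prod]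
  congr 1
  · refine card_noSmall_congr (s.equivFin.trans (finCongr hs)) t
  · have e2 : {a : Fin n // a ∉ s} ≃ Fin (n - k) := by
      refine (Equiv.subtypeEquivRight (q := (· ∈ sᶜ)) (fun a => by simp)).trans
        ((sᶜ).equivFin.trans (finCongr ?_))
      rw [Finset.card_compl, hs, Fintype.card_fin]
    exact card_noSmall_congr e2 t

lemma sum_count (n k t : ℕ) :
    ∑ σ : {σ : Equiv.Perm (Fin n) // NoSmall t σ},
      Nat.card {s : Finset (Fin n) // s.card = k ∧ s.image (σ : Equiv.Perm (Fin n)) = s} =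
    n.choose k * (Nat.card {σ : Equiv.Perm (Fin k) // NoSmall t σ} *
      Nat.card {σ : Equiv.Perm (Fin (n - k)) // NoSmall t σ}) := by
  have step1 : ∀ σ : Equiv.Perm (Fin n),
      Nat.card {s : Finset (Fin n) // s.card = k ∧ s.image σ = s} =
        ∑ s : Finset (Fin n), if s.card = k ∧ s.image σ = s then 1 else 0 := by
    intro σ
    rw [Nat.card_eq_fintype_card, Fintype.card_subtype, Finset.card_filter]
  calc ∑ σ : {σ : Equiv.Perm (Fin n) // NoSmall t σ},
      Nat.card {s : Finset (Fin n) // s.card = k ∧ s.image (σ : Equiv.Perm (Fin n)) = s}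
      = ∑ σ : {σ : Equiv.Perm (Fin n) // NoSmall t σ}, ∑ s : Finset (Fin n),
          if s.card = k ∧ s.image (σ : Equiv.Perm (Fin n)) = s then 1 else 0 :=
        Finset.sum_congr rfl (fun σ _ => step1 σ.1)
    _ = ∑ s : Finset (Fin n), ∑ σ : {σ : Equiv.Perm (Fin n) // NoSmall t σ},
          if s.card = k ∧ s.image (σ : Equiv.Perm (Fin n)) = s then 1 else 0 :=
        Finset.sum_comm
    _ = ∑ s : Finset (Fin n), if s.card = k then
          Nat.card {σ : Equiv.Perm (Fin n) // NoSmall t σ ∧ s.image σ = s} else 0 := by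
        refine Finset.sum_congr rfl (fun s _ => ?_)
        by_cases hs : s.card = k
        · simp only [hs, true_and, if_true]
          have := Nat.card_congr
            (Equiv.subtypeSubtypeEquivSubtypeInter (fun σ : Equiv.Perm (Fin n) => NoSmall t σ)
              (fun σ => s.image σ = s))
          rw [← this, Nat.card_eq_fintype_card, Fintype.card_subtype, Finset.card_filter]
        · simp [hs]
    _ = ∑ s ∈ Finset.univ.filter (fun s : Finset (Fin n) => s.card = k),
          Nat.card {σ : Equiv.Perm (Fin n) // NoSmall t σ ∧ s.image σ = s} :=
        (Finset.sum_filter _ _).symm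
    _ = ∑ s ∈ Finset.univ.filter (fun s : Finset (Fin n) => s.card = k),
          (Nat.card {σ : Equiv.Perm (Fin k) // NoSmall t σ} *
            Nat.card {σ : Equiv.Perm (Fin (n - k)) // NoSmall t σ}) :=
        Finset.sum_congr rfl (fun s hs => card_fix s (Finset.mem_filter.1 hs).2)
    _ = n.choose k * _ := by
        rw [Finset.sum_const, smul_eq_mul]
        congr 1
        have : Finset.univ.filter (fun s : Finset (Fin n) => s.card = k) =
            Finset.powersetCard k Finset.univ := by
          rw [Finset.powersetCard_eq_filter, Finset.powerset_univ]
        rw [this, Finset.card_powersetCard, Finset.card_univ, Fintype.card_fin]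

end Helpers

/-- The proportion `aₙ(t)` of permutations of `{1, …, n}` fixing (setwise) no nonempty
subset of size at most `t`. -/
noncomputable def permProp (n t : ℕ) : ℝ :=
  (Nat.card {σ : Equiv.Perm (Fin n) //
      ∀ s : Finset (Fin n), 1 ≤ s.card → s.card ≤ t → s.image σ ≠ s} : ℝ) /
    (Nat.factorial n : ℝ)

/-- Let `1 ≤ t ≤ k < n/2`, let `A` be the set of permutations in `Sₙ` fixing no nonempty
subset of size at most `t`, and let `Ω` be the set of `k`-subsets of `{1, …, n}`. Then
the expected number of fixed points on `Ω` of a uniformly random element of `A` equals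
`a_k(t) · a_{n-k}(t) · n! / |A|`. -/
theorem stmt16 (n k t : ℕ) (ht : 1 ≤ t) (htk : t ≤ k) (hk : 2 * k < n) :
    (1 / (Nat.card {σ : Equiv.Perm (Fin n) //
        ∀ s : Finset (Fin n), 1 ≤ s.card → s.card ≤ t → s.image σ ≠ s} : ℝ)) *
      ∑ σ : {σ : Equiv.Perm (Fin n) //
          ∀ s : Finset (Fin n), 1 ≤ s.card → s.card ≤ t → s.image σ ≠ s},
        (Nat.card {s : Finset (Fin n) // s.card = k ∧ s.image (σ : Equiv.Perm (Fin n)) = s} : ℝ) =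
      permProp k t * permProp (n - k) t * (Nat.factorial n : ℝ) /
        (Nat.card {σ : Equiv.Perm (Fin n) //
          ∀ s : Finset (Fin n), 1 ≤ s.card → s.card ≤ t → s.image σ ≠ s} : ℝ) := by
  have hkn : k ≤ n := by omega
  rw [one_div_mul_eq_div]
  congr 1
  -- numerators are equal
  have key : (∑ σ : {σ : Equiv.Perm (Fin n) //
        ∀ s : Finset (Fin n), 1 ≤ s.card → s.card ≤ t → s.image σ ≠ s},
      Nat.card {s : Finset (Fin n) // s.card = k ∧ s.image (σ : Equiv.Perm (Fin n)) = s}) =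
      n.choose k * (Nat.card {σ : Equiv.Perm (Fin k) //
          ∀ s : Finset (Fin k), 1 ≤ s.card → s.card ≤ t → s.image σ ≠ s} *
        Nat.card {σ : Equiv.Perm (Fin (n - k)) //
          ∀ s : Finset (Fin (n - k)), 1 ≤ s.card → s.card ≤ t → s.image σ ≠ s}) :=
    sum_count n k t
  rw [← Nat.cast_sum, key]
  unfold permProp
  have hch : (n.choose k : ℝ) * (k.factorial : ℝ) * ((n - k).factorial : ℝ) =
      (n.factorial : ℝ) := by
    rw [← Nat.cast_mul, ← Nat.cast_mul, Nat.choose_mul_factorial_mul_factorial hkn]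
  have h1 : (k.factorial : ℝ) ≠ 0 := Nat.cast_ne_zero.2 (Nat.factorial_ne_zero k)
  have h2 : ((n - k).factorial : ℝ) ≠ 0 := Nat.cast_ne_zero.2 (Nat.factorial_ne_zero (n - k))
  push_cast
  have expand : ∀ (a b c d e : ℝ), c ≠ 0 → d ≠ 0 →
      a / c * (b / d) * (e * c * d) = e * (a * b) := by
    intros a b c d e hc hd
    field_simp
  rw [← hch, expand _ _ _ _ _ h1 h2]
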